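/- For all real numbers t < T, x and all σ > 0, if the log-strike k satisfies the zero-vanna condition x − k = σ²(T−t)/2 (equivalently d2(t,T,x,k,σ) = 0), then the third derivative of the Black–Scholes price with respect to the volatility parameter equals ∂³BS/∂σ³(t,T,x,k,σ) = −(T−t) · ∂BS/∂σ(t,T,x,k,σ) = −e^x (T−t)^{3/2} φ(d1(t,T,x,k,σ)). -/

import Mathlib

noncomputable section

/-- Standard normal density. -/
def phi (z : ℝ) : ℝ := (Real.sqrt (2 * Real.pi))⁻¹ * Real.exp (-z ^ 2 / 2)

/-- Standard normal cumulative distribution function. -/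
def N (y : ℝ) : ℝ := ∫ z in Set.Iic y, phi z

/-- Black–Scholes auxiliary quantity `d₁`. -/
def d1 (t T x k σ : ℝ) : ℝ :=
  (x - k) / (σ * Real.sqrt (T - t)) + σ * Real.sqrt (T - t) / 2

/-- Black–Scholes auxiliary quantity `d₂`. -/
def d2 (t T x k σ : ℝ) : ℝ :=
  (x - k) / (σ * Real.sqrt (T - t)) - σ * Real.sqrt (T - t) / 2

/-- Black–Scholes call price with log-spot `x`, log-strike `k`,
time to maturity `T - t` and volatility `σ`. -/
def BS (t T x k σ : ℝ) : ℝ :=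
  Real.exp x * N (d1 t T x k σ) - Real.exp k * N (d2 t T x k σ)

/-! ### Auxiliary lemmas -/

lemma continuous_phi : Continuous phi := by
  unfold phi; fun_prop

lemma phi_hasDerivAt (z : ℝ) : HasDerivAt phi (-z * phi z) z := by
  have h1 : HasDerivAt (fun w : ℝ => -w ^ 2 / 2) (-z) z := by
    have := ((hasDerivAt_pow 2 z).neg).div_const 2
    convert this using 1
    · rfl
    · rfl
    · rfl
    push_cast; ring
  have h2 := (h1.exp).const_mul (Real.sqrt (2 * Real.pi))⁻¹
  have : HasDerivAt (fun w : ℝ => (Real.sqrt (2 * Real.pi))⁻¹ * Real.exp (-w ^ 2 / 2))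
      (-z * phi z) z := by
    convert h2 using 1
    · rfl
    · rfl
    unfold phi; ring
  exact this

lemma integrable_phi : MeasureTheory.Integrable phi := by
  have h : MeasureTheory.Integrable (fun z : ℝ => Real.exp (-(1/2 : ℝ) * z ^ 2)) :=
    integrable_exp_neg_mul_sq (by norm_num)
  have h2 := h.const_mul (Real.sqrt (2 * Real.pi))⁻¹
  convert h2 using 2 with z
  unfold phi
  ring_nf

lemma N_hasDerivAt (y : ℝ) : HasDerivAt N (phi y) y := by
  have hN : N = fun z => (∫ u in (0:ℝ)..z, phi u) + N 0 := by
    funext z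
    have := intervalIntegral.integral_Iic_sub_Iic
      (integrable_phi.integrableOn (s := Set.Iic 0))
      (integrable_phi.integrableOn (s := Set.Iic z))
    unfold N
    linarith [this]
  rw [hN]
  have h := intervalIntegral.integral_hasDerivAt_right
    (integrable_phi.intervalIntegrable (a := 0) (b := y))
    (continuous_phi.stronglyMeasurableAtFilter _ _)
    (continuous_phi.continuousAt)
  exact h.add_const _

lemma d1_hasDerivAt (t T x k : ℝ) (htT : t < T) {s : ℝ} (hs : 0 < s) :
    HasDerivAt (fun u => d1 t T x k u) (-(d2 t T x k s) / s) s := by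
  have hr : 0 < Real.sqrt (T - t) := Real.sqrt_pos.2 (by linarith)
  have h1 : HasDerivAt (fun u : ℝ => (x - k) / Real.sqrt (T - t) * u⁻¹ + Real.sqrt (T - t) / 2 * u)
      ((x - k) / Real.sqrt (T - t) * (-(s ^ 2)⁻¹) + Real.sqrt (T - t) / 2) s := by
    have ha := (hasDerivAt_inv hs.ne').const_mul ((x - k) / Real.sqrt (T - t))
    have hb := (hasDerivAt_id s).const_mul (Real.sqrt (T - t) / 2)
    have := ha.add hb
    rw [mul_one] at this
    exact this
  have heq : (fun u => d1 t T x k u) =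
      fun u : ℝ => (x - k) / Real.sqrt (T - t) * u⁻¹ + Real.sqrt (T - t) / 2 * u := by
    funext u
    unfold d1
    rw [mul_comm u, ← div_div, div_eq_mul_inv]
    ring
  rw [heq]
  convert h1 using 1
  unfold d2
  field_simp
  ring

lemma d2_hasDerivAt (t T x k : ℝ) (htT : t < T) {s : ℝ} (hs : 0 < s) :
    HasDerivAt (fun u => d2 t T x k u) (-(d1 t T x k s) / s) s := by
  have hr : 0 < Real.sqrt (T - t) := Real.sqrt_pos.2 (by linarith)
  have h1 : HasDerivAt (fun u : ℝ => (x - k) / Real.sqrt (T - t) * u⁻¹ - Real.sqrt (T - t) / 2 * u)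
      ((x - k) / Real.sqrt (T - t) * (-(s ^ 2)⁻¹) - Real.sqrt (T - t) / 2) s := by
    have ha := (hasDerivAt_inv hs.ne').const_mul ((x - k) / Real.sqrt (T - t))
    have hb := (hasDerivAt_id s).const_mul (Real.sqrt (T - t) / 2)
    have := ha.sub hb
    rw [mul_one] at this
    exact this
  have heq : (fun u => d2 t T x k u) =
      fun u : ℝ => (x - k) / Real.sqrt (T - t) * u⁻¹ - Real.sqrt (T - t) / 2 * u := by
    funext u
    unfold d2
    rw [mul_comm u, ← div_div, div_eq_mul_inv]
    ring
  rw [heq]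
  convert h1 using 1
  unfold d1
  field_simp
  ring

lemma phi_identity (t T x k : ℝ) (htT : t < T) {s : ℝ} (hs : 0 < s) :
    Real.exp x * phi (d1 t T x k s) = Real.exp k * phi (d2 t T x k s) := by
  have hr : 0 < Real.sqrt (T - t) := Real.sqrt_pos.2 (by linarith)
  have key : x + -(d1 t T x k s) ^ 2 / 2 = k + -(d2 t T x k s) ^ 2 / 2 := by
    unfold d1 d2
    field_simp
    ring
  unfold phi
  rw [show Real.exp x * ((Real.sqrt (2 * Real.pi))⁻¹ * Real.exp (-(d1 t T x k s) ^ 2 / 2))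
      = (Real.sqrt (2 * Real.pi))⁻¹ * Real.exp (x + -(d1 t T x k s) ^ 2 / 2) by
    rw [Real.exp_add]; ring]
  rw [show Real.exp k * ((Real.sqrt (2 * Real.pi))⁻¹ * Real.exp (-(d2 t T x k s) ^ 2 / 2))
      = (Real.sqrt (2 * Real.pi))⁻¹ * Real.exp (k + -(d2 t T x k s) ^ 2 / 2) by
    rw [Real.exp_add]; ring]
  rw [key]

/-- The Black–Scholes vega. -/
def vega (t T x k s : ℝ) : ℝ := Real.exp x * Real.sqrt (T - t) * phi (d1 t T x k s)

/-- The Black–Scholes volga (second volatility derivative). -/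
def volga (t T x k s : ℝ) : ℝ := vega t T x k s * (d1 t T x k s * d2 t T x k s / s)

lemma d1_sub_d2 (t T x k s : ℝ) : d1 t T x k s - d2 t T x k s = s * Real.sqrt (T - t) := by
  unfold d1 d2; ring

lemma BS_hasDerivAt (t T x k : ℝ) (htT : t < T) {s : ℝ} (hs : 0 < s) :
    HasDerivAt (fun u => BS t T x k u) (vega t T x k s) s := by
  have h1 := ((N_hasDerivAt (d1 t T x k s)).comp s (d1_hasDerivAt t T x k htT hs)).const_mul
    (Real.exp x)
  have h2 := ((N_hasDerivAt (d2 t T x k s)).comp s (d2_hasDerivAt t T x k htT hs)).const_mul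
    (Real.exp k)
  have h := h1.sub h2
  have hfun : (fun u => BS t T x k u) =
      fun u => Real.exp x * N (d1 t T x k u) - Real.exp k * N (d2 t T x k u) := rfl
  rw [hfun]
  convert h using 1
  · rfl
  · rfl
  · rfl
  have hid := phi_identity t T x k htT hs
  rw [show Real.exp x * (phi (d1 t T x k s) * (-(d2 t T x k s) / s))
        - Real.exp k * (phi (d2 t T x k s) * (-(d1 t T x k s) / s))
      = Real.exp x * phi (d1 t T x k s) * (-(d2 t T x k s) / s)
        - Real.exp k * phi (d2 t T x k s) * (-(d1 t T x k s) / s) by ring, ← hid]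
  unfold vega
  rw [show Real.exp x * phi (d1 t T x k s) * (-(d2 t T x k s) / s)
        - Real.exp x * phi (d1 t T x k s) * (-(d1 t T x k s) / s)
      = Real.exp x * phi (d1 t T x k s) * ((d1 t T x k s - d2 t T x k s) / s) by ring,
    d1_sub_d2]
  field_simp

lemma vega_hasDerivAt (t T x k : ℝ) (htT : t < T) {s : ℝ} (hs : 0 < s) :
    HasDerivAt (fun u => vega t T x k u) (volga t T x k s) s := by
  have h := ((phi_hasDerivAt (d1 t T x k s)).comp s (d1_hasDerivAt t T x k htT hs)).const_mul
    (Real.exp x * Real.sqrt (T - t))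
  have hfun : (fun u => vega t T x k u) =
      fun u => Real.exp x * Real.sqrt (T - t) * phi (d1 t T x k u) := rfl
  rw [hfun]
  convert h using 1
  · rfl
  · rfl
  · rfl
  unfold volga vega
  field_simp

lemma volga_hasDerivAt (t T x k : ℝ) (htT : t < T) {s : ℝ} (hs : 0 < s)
    (h0 : d2 t T x k s = 0) :
    HasDerivAt (fun u => volga t T x k u)
      (-(Real.exp x * Real.sqrt (T - t) * phi (d1 t T x k s) * d1 t T x k s ^ 2 / s ^ 2)) s := by
  have hd1 := d1_hasDerivAt t T x k htT hs
  have hd2 := d2_hasDerivAt t T x k htT hs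
  have hphi := ((phi_hasDerivAt (d1 t T x k s)).comp s hd1).const_mul
    (Real.exp x * Real.sqrt (T - t))
  have hinv := hasDerivAt_inv hs.ne'
  have h := hphi.mul ((hd1.mul hd2).mul hinv)
  have hfun : (fun u => volga t T x k u) =
      fun u => Real.exp x * Real.sqrt (T - t) * phi (d1 t T x k u) *
        (d1 t T x k u * d2 t T x k u * u⁻¹) := by
    funext u; unfold volga vega; ring
  rw [hfun]
  convert h using 1
  · rfl
  · rfl
  · rfl
  simp only [Function.comp, Pi.mul_apply]
  rw [h0]
  field_simp
  ring

theorem bs_third_vol_derivative_zero_vanna (t T x k σ : ℝ) (htT : t < T) (hσ : 0 < σ)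
    (hk : x - k = σ ^ 2 * (T - t) / 2) :
    iteratedDeriv 3 (fun s => BS t T x k s) σ = -(T - t) * deriv (fun s => BS t T x k s) σ ∧
    iteratedDeriv 3 (fun s => BS t T x k s) σ =
      -(Real.exp x * (T - t) ^ ((3 : ℝ) / 2) * phi (d1 t T x k σ)) := by
  have hτ : (0 : ℝ) < T - t := by linarith
  have hr : 0 < Real.sqrt (T - t) := Real.sqrt_pos.2 hτ
  have hrr : Real.sqrt (T - t) * Real.sqrt (T - t) = T - t := Real.mul_self_sqrt hτ.le
  -- zero-vanna consequences
  have hd2z : d2 t T x k σ = 0 := by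
    unfold d2
    rw [hk]
    field_simp
    nlinarith [hrr]
  have hd1v : d1 t T x k σ = σ * Real.sqrt (T - t) := by
    have hsub : d1 t T x k σ - d2 t T x k σ = σ * Real.sqrt (T - t) := by unfold d1 d2; ring
    linarith
  -- eventual equalities of derivatives near σ
  have hmem : Set.Ioi (0 : ℝ) ∈ nhds σ := isOpen_Ioi.mem_nhds hσ
  have hev1 : deriv (fun s => BS t T x k s) =ᶠ[nhds σ] fun s => vega t T x k s :=
    Filter.eventuallyEq_of_mem hmem fun s hs => (BS_hasDerivAt t T x k htT hs).deriv
  have hev2 : deriv (deriv (fun s => BS t T x k s)) =ᶠ[nhds σ] fun s => volga t T x k s := by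
    refine hev1.deriv.trans (Filter.eventuallyEq_of_mem hmem fun s hs => ?_)
    exact (vega_hasDerivAt t T x k htT hs).deriv
  have h3 : iteratedDeriv 3 (fun s => BS t T x k s) σ =
      -(Real.exp x * Real.sqrt (T - t) * phi (d1 t T x k σ) * d1 t T x k σ ^ 2 / σ ^ 2) := by
    rw [show (3 : ℕ) = 2 + 1 from rfl, iteratedDeriv_succ,
      show (2 : ℕ) = 1 + 1 from rfl, iteratedDeriv_succ, iteratedDeriv_one]
    rw [hev2.deriv.self_of_nhds]
    exact (volga_hasDerivAt t T x k htT hσ hd2z).deriv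
  have hderiv1 : deriv (fun s => BS t T x k s) σ = vega t T x k σ :=
    (BS_hasDerivAt t T x k htT hσ).deriv
  have hval : -(Real.exp x * Real.sqrt (T - t) * phi (d1 t T x k σ) * d1 t T x k σ ^ 2 / σ ^ 2)
      = -((T - t) * vega t T x k σ) := by
    unfold vega
    rw [hd1v, mul_pow, Real.sq_sqrt hτ.le]
    field_simp
  constructor
  · rw [h3, hderiv1, hval]; ring
  · rw [h3, hval]
    unfold vega
    have h32 : (T - t) ^ ((3 : ℝ) / 2) = (T - t) * Real.sqrt (T - t) := by
      rw [show (3 : ℝ) / 2 = 1 + 1 / 2 by norm_num, Real.rpow_add hτ, Real.rpow_one,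
        ← Real.sqrt_eq_rpow]
    rw [h32]
    ring
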